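/- arXiv:1610.00441 — 5 statements merged into one kernel-verified Lean document; each statement's English description precedes it below -/
import Mathlib

section
/- Let M be a smooth manifold without boundary modelled on a finite-dimensional real normed space, and let N be a Hausdorff, σ-compact smooth manifold without boundary modelled on a finite-dimensional real normed space. Let f : M → N be a continuous map such that for every smooth function g : N → ℝ the composite g ∘ f : M → ℝ is smooth. Then f is smooth. -/
open scoped Manifold

open Set Function Topology Filter

/-- A continuous map between smooth manifolds (the target being Hausdorff and σ-compact)
which pulls back smooth real-valued functions to smooth functions is itself smooth. -/
theorem stmt_1
    {E : Type*} [NormedAddCommGroup E] [NormedSpace ℝ E] [FiniteDimensional ℝ E]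
    {E' : Type*} [NormedAddCommGroup E'] [NormedSpace ℝ E'] [FiniteDimensional ℝ E']
    {M : Type*} [TopologicalSpace M] [ChartedSpace E M]
    [IsManifold 𝓘(ℝ, E) (⊤ : ℕ∞) M]
    {N : Type*} [TopologicalSpace N] [ChartedSpace E' N]
    [IsManifold 𝓘(ℝ, E') (⊤ : ℕ∞) N]
    [T2Space N] [SigmaCompactSpace N]
    (f : M → N) (hf : Continuous f)
    (h : ∀ g : N → ℝ, ContMDiff 𝓘(ℝ, E') 𝓘(ℝ, ℝ) (⊤ : ℕ∞) g →
      ContMDiff 𝓘(ℝ, E) 𝓘(ℝ, ℝ) (⊤ : ℕ∞) (g ∘ f)) :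
    ContMDiff 𝓘(ℝ, E) 𝓘(ℝ, E') (⊤ : ℕ∞) f := by
  haveI : LocallyCompactSpace N := ChartedSpace.locallyCompactSpace E' N
  haveI : NormalSpace N := by infer_instance
  -- first upgrade the hypothesis to vector-valued smooth functions
  have h' : ∀ g : N → E', ContMDiff 𝓘(ℝ, E') 𝓘(ℝ, E') (⊤ : ℕ∞) g →
      ContMDiff 𝓘(ℝ, E) 𝓘(ℝ, E') (⊤ : ℕ∞) (g ∘ f) := by
    intro g hg
    obtain ⟨ι, ⟨b⟩⟩ := Module.Basis.exists_basis ℝ E'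
    haveI : Fintype ι := FiniteDimensional.fintypeBasisIndex b
    have hrepr : ∀ x : M, g (f x) = ∑ i : ι, (b.coord i).toContinuousLinearMap (g (f x)) • b i := by
      intro x
      simp [LinearMap.coe_toContinuousLinearMap', Module.Basis.coord_apply]
    have : ContMDiff 𝓘(ℝ, E) 𝓘(ℝ, E') (⊤ : ℕ∞)
        (fun x => ∑ i : ι, (b.coord i).toContinuousLinearMap (g (f x)) • b i) := by
      apply contMDiff_finset_sum
      intro i _
      have hcoord : ContMDiff 𝓘(ℝ, E) 𝓘(ℝ, ℝ) (⊤ : ℕ∞)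
          (fun x : M => (b.coord i).toContinuousLinearMap (g (f x))) :=
        h _ (((b.coord i).toContinuousLinearMap.contMDiff).comp hg)
      exact hcoord.smul contMDiff_const
    have heq : (g ∘ f) = fun x => ∑ i : ι, (b.coord i).toContinuousLinearMap (g (f x)) • b i :=
      funext fun z => hrepr z
    rw [heq]; exact this
  intro x
  set c := f x with hc
  -- a cutoff function equal to 1 near c and vanishing near the complement of the chart source
  obtain ⟨χ, hχ0, hχ1, -⟩ := exists_contMDiffMap_zero_one_nhds_of_isClosed 𝓘(ℝ, E') (n := (⊤ : ℕ∞))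
    (isClosed_compl_iff.mpr (chartAt E' c).open_source) (isClosed_singleton (x := c))
    (by
      rw [disjoint_singleton_right]
      simp [mem_chart_source])
  set g : N → E' := fun y => χ y • extChartAt 𝓘(ℝ, E') c y with hgdef
  have hg : ContMDiff 𝓘(ℝ, E') 𝓘(ℝ, E') (⊤ : ℕ∞) g := by
    intro y
    by_cases hy : y ∈ (chartAt E' c).source
    · exact (χ.contMDiff y).smul (contMDiffAt_extChartAt' (by simpa using hy))
    · have h0 : ∀ᶠ z in 𝓝 y, χ z = 0 :=
        Filter.Eventually.filter_mono (nhds_le_nhdsSet (show y ∈ (chartAt E' c).sourceᶜ from hy)) hχ0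
      have hg0 : ∀ᶠ z in 𝓝 y, g z = 0 := by
        filter_upwards [h0] with z hz
        simp [hgdef, hz]
      exact (contMDiffAt_const (c := (0 : E'))).congr_of_eventuallyEq hg0
  have hgf := h' g hg
  -- near x, `g ∘ f` coincides with `extChartAt ∘ f`
  have h1 : ∀ᶠ z in 𝓝 x, g (f z) = extChartAt 𝓘(ℝ, E') c (f z) := by
    have hc1 : ∀ᶠ y in 𝓝 c, χ y = 1 := Filter.Eventually.filter_mono (nhds_le_nhdsSet (Set.mem_singleton c)) hχ1
    have : ∀ᶠ z in 𝓝 x, χ (f z) = 1 := hf.continuousAt.eventually hc1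
    filter_upwards [this] with z hz
    simp [hgdef, hz]
  rw [contMDiffAt_iff_target]
  refine ⟨hf.continuousAt, ?_⟩
  exact (hgf x).congr_of_eventuallyEq (by filter_upwards [h1] with z hz; simp [hz, hc])
end

section
/- Let N be a Hausdorff, σ-compact smooth manifold without boundary modelled on a finite-dimensional real normed space, and let C^∞(N,ℝ) denote the commutative ℝ-algebra of smooth real-valued functions on N. Then every ℝ-algebra homomorphism φ : C^∞(N,ℝ) → ℝ is given by evaluation at a unique point of N: there exists a unique x ∈ N such that φ(g) = g(x) for all g ∈ C^∞(N,ℝ). -/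
open scoped Manifold
open Set Function

section aux

variable
    {E : Type*} [NormedAddCommGroup E] [NormedSpace ℝ E] [FiniteDimensional ℝ E]
    {N : Type*} [TopologicalSpace N] [ChartedSpace E N]
    [IsManifold 𝓘(ℝ, E) (⊤ : ℕ∞) N]
    [T2Space N] [SigmaCompactSpace N]

/-- On a σ-compact manifold there is a smooth exhaustion function: a smooth real function
whose sublevel sets are contained in compact sets. -/
theorem exists_smooth_exhaustion :
    ∃ f : ContMDiffMap 𝓘(ℝ, E) 𝓘(ℝ, ℝ) N ℝ (⊤ : ℕ∞), ∀ c : ℝ, IsCompact {x : N | f x ≤ c} := by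
  haveI : LocallyCompactSpace N := Manifold.locallyCompact_of_finiteDimensional 𝓘(ℝ, E)
  set K : CompactExhaustion N := CompactExhaustion.choice N
  have hdisj : ∀ n : ℕ, Disjoint (K n) (interior (K (n + 1)))ᶜ := fun n =>
    disjoint_compl_right.mono_left (K.subset_interior_succ n)
  choose χ hχ0 hχ1 hχmem using fun n : ℕ =>
    exists_contMDiffMap_zero_one_of_isClosed 𝓘(ℝ, E) (n := ⊤) (K.isCompact n).isClosed
      isOpen_interior.isClosed_compl (hdisj n)
  have hχnonneg : ∀ (n : ℕ) (x : N), 0 ≤ χ n x := fun n x => (hχmem n x).1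
  -- local finiteness of the supports
  have hlf : LocallyFinite fun n : ℕ => support fun x : N => χ n x := by
    intro x
    obtain ⟨m, hm⟩ : ∃ m, x ∈ K m := ⟨K.find x, K.mem_find x⟩
    refine ⟨interior (K (m + 1)), isOpen_interior.mem_nhds (K.subset_interior_succ m hm), ?_⟩
    apply Set.Finite.subset (Set.finite_Iic m)
    intro n hn
    by_contra hnm
    simp only [Set.mem_Iic, not_le] at hnm
    obtain ⟨y, hy1, hy2⟩ := hn
    have hyK : y ∈ K n := K.subset hnm (interior_subset hy2)
    exact hy1 (hχ0 n hyK)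
  have hsmooth : ContMDiff 𝓘(ℝ, E) 𝓘(ℝ, ℝ) (⊤ : ℕ∞) fun x : N => ∑ᶠ n, χ n x :=
    contMDiff_finsum (fun n => (χ n).contMDiff) hlf
  refine ⟨⟨fun x => ∑ᶠ n, χ n x, hsmooth⟩, fun c => ?_⟩
  -- lower bound: outside `K n`, the function is at least `n`
  have key : ∀ (n : ℕ) (x : N), x ∉ K n → (n : ℝ) ≤ ∑ᶠ k, χ k x := by
    intro n x hx
    have hone : ∀ k < n, χ k x = 1 := by
      intro k hk
      refine hχ1 k ?_
      intro hxk
      exact hx (K.subset hk (interior_subset hxk))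
    have hfin : (support fun k : ℕ => χ k x).Finite := hlf.point_finite x
    have hsub : Finset.range n ⊆ hfin.toFinset := by
      intro k hk
      simp only [Set.Finite.mem_toFinset, mem_support]
      rw [hone k (Finset.mem_range.mp hk)]
      norm_num
    calc (n : ℝ) = ∑ k ∈ Finset.range n, χ k x := by
              rw [Finset.sum_congr rfl fun k hk => hone k (Finset.mem_range.mp hk)]
              simp
      _ ≤ ∑ k ∈ hfin.toFinset, χ k x :=
              Finset.sum_le_sum_of_subset_of_nonneg hsub fun k _ _ => hχnonneg k x
      _ = ∑ᶠ k, χ k x := (finsum_eq_sum _ hfin).symm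
  obtain ⟨n, hn⟩ : ∃ n : ℕ, c < n := exists_nat_gt c
  have hsub : {x : N | (∑ᶠ k, χ k x) ≤ c} ⊆ K n := by
    intro x hx
    by_contra hxn
    exact absurd (le_trans (key n x hxn) hx) (not_le.mpr hn)
  refine (K.isCompact n).of_isClosed_subset ?_ hsub
  exact isClosed_le (hsmooth.continuous) continuous_const

end aux

/-- Every `ℝ`-algebra homomorphism from the algebra of smooth real-valued functions on a
Hausdorff, σ-compact smooth manifold to `ℝ` is evaluation at a unique point. -/
theorem stmt_2
    {E : Type*} [NormedAddCommGroup E] [NormedSpace ℝ E] [FiniteDimensional ℝ E]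
    {N : Type*} [TopologicalSpace N] [ChartedSpace E N]
    [IsManifold 𝓘(ℝ, E) (⊤ : ℕ∞) N]
    [T2Space N] [SigmaCompactSpace N]
    (φ : ContMDiffMap 𝓘(ℝ, E) 𝓘(ℝ, ℝ) N ℝ (⊤ : ℕ∞) →ₐ[ℝ] ℝ) :
    ∃! x : N, ∀ g : ContMDiffMap 𝓘(ℝ, E) 𝓘(ℝ, ℝ) N ℝ (⊤ : ℕ∞), φ g = g x := by
  classical
  set A := ContMDiffMap 𝓘(ℝ, E) 𝓘(ℝ, ℝ) N ℝ (⊤ : ℕ∞) with hA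
  set Z : A → Set N := fun g => {x | g x = φ g} with hZ
  have hZclosed : ∀ g : A, IsClosed (Z g) :=
    fun g => isClosed_eq g.contMDiff.continuous continuous_const
  obtain ⟨f, hf⟩ := exists_smooth_exhaustion (E := E) (N := N)
  -- finite intersection property
  have key : ∀ s : Finset A, (Z f ∩ ⋂ g ∈ s, Z g).Nonempty := by
    intro s
    by_contra hne
    rw [Set.not_nonempty_iff_eq_empty] at hne
    set h : A := (f - algebraMap ℝ A (φ f)) ^ 2
      + ∑ g ∈ s, (g - algebraMap ℝ A (φ g)) ^ 2 with hh
    have hφh : φ h = 0 := by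
      have hc : ∀ c : ℝ, φ (algebraMap ℝ A c) = c := fun c => φ.commutes c
      simp [hh, map_add, map_pow, map_sub, hc, map_sum]
    have hpos : ∀ x : N, 0 < h x := by
      intro x
      have hx : x ∉ Z f ∩ ⋂ g ∈ s, Z g := by rw [hne]; exact Set.notMem_empty x
      have hval : h x = (f x - φ f) ^ 2 + ∑ g ∈ s, (g x - φ g) ^ 2 := by
        set ev : A →+* ℝ := ContMDiffMap.evalRingHom x with hevdef
        have e1 : ∀ g : A, ev g = g x := fun _ => rfl
        have e2 : ∀ c : ℝ, ev (algebraMap ℝ A c) = c := fun _ => rfl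
        calc h x = ev h := rfl
          _ = (f x - φ f) ^ 2 + ∑ g ∈ s, (g x - φ g) ^ 2 := by
              rw [hh, map_add, map_pow, map_sub, map_sum, e1, e2]
              refine congrArg _ (Finset.sum_congr rfl fun g _ => ?_)
              rw [map_pow, map_sub, e1, e2]
      rw [hval]
      rcases Classical.em (f x = φ f ∧ ∀ g ∈ s, g x = φ g) with hcase | hcase
      · exfalso
        refine hx ⟨hcase.1, ?_⟩
        simp only [Set.mem_iInter]
        exact fun g hg => hcase.2 g hg
      · rw [not_and_or] at hcase
        rcases hcase with hcase | hcase
        · have h1 : 0 < (f x - φ f) ^ 2 :=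
            lt_of_le_of_ne (sq_nonneg _) (Ne.symm (pow_ne_zero 2 (sub_ne_zero.mpr hcase)))
          have h2 : 0 ≤ ∑ g ∈ s, (g x - φ g) ^ 2 :=
            Finset.sum_nonneg fun g _ => sq_nonneg _
          linarith
        · push_neg at hcase
          obtain ⟨g, hgs, hgx⟩ := hcase
          have h1 : 0 < ∑ g ∈ s, (g x - φ g) ^ 2 := by
            refine Finset.sum_pos' (fun g _ => sq_nonneg _)
              ⟨g, hgs, lt_of_le_of_ne (sq_nonneg _)
                (Ne.symm (pow_ne_zero 2 (sub_ne_zero.mpr hgx)))⟩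
          have h2 : 0 ≤ (f x - φ f) ^ 2 := sq_nonneg _
          linarith
    -- h is invertible, contradiction with φ h = 0
    have hne0 : ∀ x : N, h x ≠ 0 := fun x => (hpos x).ne'
    set hinv : A := ⟨fun x => (h x)⁻¹, h.contMDiff.inv₀ hne0⟩ with hhinv
    have hmul : h * hinv = 1 := by
      ext x
      exact mul_inv_cancel₀ (hne0 x)
    have : (0 : ℝ) = 1 := by
      calc (0 : ℝ) = φ h * φ hinv := by rw [hφh, zero_mul]
        _ = φ (h * hinv) := (map_mul φ h hinv).symm
        _ = 1 := by rw [hmul, map_one]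
    norm_num at this
  -- Z f is compact
  have hZfc : IsCompact (Z f) := by
    refine (hf (φ f)).of_isClosed_subset (hZclosed f) ?_
    intro x hx
    exact le_of_eq hx
  obtain ⟨x, -, hx⟩ := hZfc.inter_iInter_nonempty Z hZclosed key
  simp only [Set.mem_iInter] at hx
  have hx' : ∀ g : A, g x = φ g := fun g => hx g
  refine ⟨x, fun g => (hx' g).symm, ?_⟩
  -- uniqueness: smooth functions separate points
  intro y hy
  by_contra hxy
  have hd : Disjoint ({y} : Set N) ({x} : Set N) := by
    simp [Set.disjoint_singleton, hxy]
  obtain ⟨g, hg0, hg1, -⟩ := exists_contMDiffMap_zero_one_of_isClosed 𝓘(ℝ, E) (n := ⊤)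
    (isClosed_singleton (x := y)) (isClosed_singleton (x := x)) hd
  have h0 : g y = 0 := hg0 rfl
  have h1 : g x = 1 := hg1 rfl
  have : g y = g x := (hy g).symm.trans (hx' g).symm
  rw [h0, h1] at this
  norm_num at this
end

section
/- Let M and N be smooth manifolds without boundary modelled on finite-dimensional real normed spaces, with N Hausdorff and σ-compact. Then for every ℝ-algebra homomorphism φ : C^∞(N,ℝ) → C^∞(M,ℝ) there exists a unique smooth map f : M → N such that φ(g) = g ∘ f for all g ∈ C^∞(N,ℝ). Equivalently, the map sending a smooth map f : M → N to the precomposition homomorphism g ↦ g ∘ f is a bijection from smooth maps M → N to ℝ-algebra homomorphisms C^∞(N,ℝ) → C^∞(M,ℝ). -/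
open scoped Manifold Classical
open Set Filter Topology

/-- Precomposition with a smooth map `f : M → N`, as an `ℝ`-algebra homomorphism
`C^∞(N,ℝ) →ₐ[ℝ] C^∞(M,ℝ)`. -/
noncomputable def precompAlgHom
    {E : Type*} [NormedAddCommGroup E] [NormedSpace ℝ E]
    {E' : Type*} [NormedAddCommGroup E'] [NormedSpace ℝ E']
    {M : Type*} [TopologicalSpace M] [ChartedSpace E M]
    {N : Type*} [TopologicalSpace N] [ChartedSpace E' N]
    (f : ContMDiffMap 𝓘(ℝ, E) 𝓘(ℝ, E') M N (⊤ : ℕ∞)) :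
    (ContMDiffMap 𝓘(ℝ, E') 𝓘(ℝ, ℝ) N ℝ (⊤ : ℕ∞) →ₐ[ℝ] ContMDiffMap 𝓘(ℝ, E) 𝓘(ℝ, ℝ) M ℝ (⊤ : ℕ∞)) where
  toFun g := g.comp f
  map_one' := rfl
  map_mul' _ _ := rfl
  map_zero' := rfl
  map_add' _ _ := rfl
  commutes' _ := rfl

section Aux
variable {E' : Type*} [NormedAddCommGroup E'] [NormedSpace ℝ E'] [FiniteDimensional ℝ E']
  {N : Type*} [TopologicalSpace N] [ChartedSpace E' N]
  [IsManifold 𝓘(ℝ, E') (⊤ : ℕ∞) N] [T2Space N] [SigmaCompactSpace N]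

/-- Evaluation at a point as an `ℝ`-algebra homomorphism. -/
noncomputable def evalAlgHom' {E : Type*} [NormedAddCommGroup E] [NormedSpace ℝ E]
    {M : Type*} [TopologicalSpace M] [ChartedSpace E M] (x : M) :
    (ContMDiffMap 𝓘(ℝ, E) 𝓘(ℝ, ℝ) M ℝ (⊤ : ℕ∞) →ₐ[ℝ] ℝ) where
  toFun g := g x
  map_one' := rfl
  map_mul' _ _ := rfl
  map_zero' := rfl
  map_add' _ _ := rfl
  commutes' _ := rfl

@[simp] theorem evalAlgHom'_apply {E : Type*} [NormedAddCommGroup E] [NormedSpace ℝ E]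
    {M : Type*} [TopologicalSpace M] [ChartedSpace E M] (x : M)
    (g : ContMDiffMap 𝓘(ℝ, E) 𝓘(ℝ, ℝ) M ℝ (⊤ : ℕ∞)) : evalAlgHom' x g = g x := rfl

/-- There is a smooth proper (exhaustion) function on `N`. -/
theorem exists_smooth_proper :
    
∃ h : ContMDiffMap 𝓘(ℝ, E') 𝓘(ℝ, ℝ) N ℝ (⊤ : ℕ∞), ∀ c : ℝ, IsCompact {q : N | h q ≤ c} := by
  haveI : LocallyCompactSpace N := Manifold.locallyCompact_of_finiteDimensional 𝓘(ℝ, E')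
  set K := CompactExhaustion.choice N with hK
  have Hloc : ∀ q : N, ∃ c : ℝ, ∀ᶠ y in 𝓝 q, c ∈ Ici ((K.find y : ℕ) : ℝ) := by
    intro q
    refine ⟨((K.find q + 1 : ℕ) : ℝ), ?_⟩
    have h1 : q ∈ interior (K (K.find q + 1)) := K.subset_interior_succ _ (K.mem_find q)
    filter_upwards [isOpen_interior.mem_nhds h1] with y hy
    have : K.find y ≤ K.find q + 1 := K.mem_iff_find_le.1 (interior_subset hy)
    exact mem_Ici.2 (by exact_mod_cast Nat.cast_le.2 this)
  obtain ⟨h, hh⟩ := exists_contMDiffMap_forall_mem_convex_of_local_const (𝓘(ℝ, E'))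
    (t := fun q : N => Ici ((K.find q : ℕ) : ℝ)) (fun q => convex_Ici _) Hloc
  refine ⟨h, fun c => ?_⟩
  refine (K.isCompact ⌈c⌉₊).of_isClosed_subset
    (isClosed_le h.contMDiff.continuous continuous_const) (fun q hq => ?_)
  have h1 : (K.find q : ℝ) ≤ c := le_trans (hh q) hq
  have h2 : K.find q ≤ ⌈c⌉₊ := by exact_mod_cast h1.trans (Nat.le_ceil c)
  exact K.mem_iff_find_le.2 h2

/-- Separating points by smooth functions. -/
theorem exists_smooth_sep {p q : N} (hpq : p ≠ q) :
    ∃ g : ContMDiffMap 𝓘(ℝ, E') 𝓘(ℝ, ℝ) N ℝ (⊤ : ℕ∞), g p = 0 ∧ g q = 1 := by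
  obtain ⟨g, h0, h1, -⟩ := exists_contMDiffMap_zero_one_of_isClosed (𝓘(ℝ, E'))
    (isClosed_singleton (x := p)) (isClosed_singleton (x := q))
    (disjoint_singleton.2 hpq)
  exact ⟨g, h0 rfl, h1 rfl⟩

end Aux

section Char
variable {E' : Type*} [NormedAddCommGroup E'] [NormedSpace ℝ E'] [FiniteDimensional ℝ E']
  {N : Type*} [TopologicalSpace N] [ChartedSpace E' N]
  [IsManifold 𝓘(ℝ, E') (⊤ : ℕ∞) N] [T2Space N] [SigmaCompactSpace N]

/-- Every `ℝ`-algebra character of `C^∞(N, ℝ)` is evaluation at a point. -/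
theorem char_is_eval (χ : ContMDiffMap 𝓘(ℝ, E') 𝓘(ℝ, ℝ) N ℝ (⊤ : ℕ∞) →ₐ[ℝ] ℝ) :
    ∃ p : N, ∀ g : ContMDiffMap 𝓘(ℝ, E') 𝓘(ℝ, ℝ) N ℝ (⊤ : ℕ∞), χ g = g p := by
  by_contra hcon
  push_neg at hcon
  choose g hg using hcon
  obtain ⟨h, hh⟩ := exists_smooth_proper (E' := E') (N := N)
  set c : ℝ := χ h with hc
  set K : Set N := {q : N | h q ≤ c + 1} with hKdef
  have hKc : IsCompact K := hh (c + 1)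
  -- cover K by the open sets where g p differs from its χ-value
  have hcover : K ⊆ ⋃ p : N, {q : N | g p q ≠ χ (g p)} := by
    intro q _
    exact mem_iUnion.2 ⟨q, fun hq => hg q hq.symm⟩
  obtain ⟨s, hs⟩ := hKc.elim_finite_subcover (fun p : N => {q : N | g p q ≠ χ (g p)})
    (fun p => isOpen_ne.preimage (g p).contMDiff.continuous) hcover
  -- the positive function killed by χ
  set F : ContMDiffMap 𝓘(ℝ, E') 𝓘(ℝ, ℝ) N ℝ (⊤ : ℕ∞) :=
    (h - algebraMap ℝ _ c) ^ 2 + ∑ p ∈ s, (g p - algebraMap ℝ _ (χ (g p))) ^ 2 with hF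
  have hχF : χ F = 0 := by
    simp [hF, map_add, map_pow, map_sub, map_sum, AlgHom.commutes]
    exact sub_eq_zero.2 hc.symm
  have hFval : ∀ q : N, F q = (h q - c) ^ 2 + ∑ p ∈ s, (g p q - χ (g p)) ^ 2 := by
    intro q
    show evalAlgHom' q F = _
    rw [hF, map_add, map_pow, map_sub, map_sum]
    simp only [map_pow, map_sub, AlgHom.commutes, evalAlgHom'_apply, Algebra.algebraMap_self,
      RingHom.id_apply]
  have hFpos : ∀ q : N, 0 < F q := by
    intro q
    rw [hFval]
    by_cases hq : q ∈ K
    · obtain ⟨p, hps, hpq⟩ := by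
        simpa only [mem_iUnion, exists_prop] using hs hq
      have h1 : 0 < (g p q - χ (g p)) ^ 2 :=
        lt_of_le_of_ne (sq_nonneg _) (Ne.symm (pow_ne_zero 2 (sub_ne_zero.2 hpq)))
      have h2 : 0 < ∑ p ∈ s, (g p q - χ (g p)) ^ 2 :=
        Finset.sum_pos' (fun i _ => sq_nonneg _) ⟨p, hps, h1⟩
      have h3 : (0:ℝ) ≤ (h q - c) ^ 2 := sq_nonneg _
      linarith
    · have h1 : c + 1 < h q := lt_of_not_ge hq
      have h2 : (1:ℝ) ≤ (h q - c) ^ 2 := by nlinarith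
      have h3 : (0:ℝ) ≤ ∑ p ∈ s, (g p q - χ (g p)) ^ 2 :=
        Finset.sum_nonneg fun i _ => sq_nonneg _
      linarith
  -- F is invertible, contradiction
  set Finv : ContMDiffMap 𝓘(ℝ, E') 𝓘(ℝ, ℝ) N ℝ (⊤ : ℕ∞) :=
    ⟨fun q => (F q)⁻¹, F.contMDiff.inv₀ fun q => (hFpos q).ne'⟩ with hFinv
  have hmul : F * Finv = 1 := by
    ext q
    show F q * (F q)⁻¹ = 1
    exact mul_inv_cancel₀ (hFpos q).ne'
  have : (1:ℝ) = 0 := by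
    calc (1:ℝ) = χ (F * Finv) := by rw [hmul]; exact (map_one χ).symm
    _ = χ F * χ Finv := map_mul χ _ _
    _ = 0 := by rw [hχF, zero_mul]
  exact one_ne_zero this

end Char

section Main
variable {E : Type*} [NormedAddCommGroup E] [NormedSpace ℝ E] [FiniteDimensional ℝ E]
  {E' : Type*} [NormedAddCommGroup E'] [NormedSpace ℝ E'] [FiniteDimensional ℝ E']
  {M : Type*} [TopologicalSpace M] [ChartedSpace E M]
  [IsManifold 𝓘(ℝ, E) (⊤ : ℕ∞) M]
  {N : Type*} [TopologicalSpace N] [ChartedSpace E' N]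
  [IsManifold 𝓘(ℝ, E') (⊤ : ℕ∞) N] [T2Space N] [SigmaCompactSpace N]

set_option linter.unusedSectionVars false

theorem eq_of_forall_smooth_eq {p q : N}
    (h : ∀ g : ContMDiffMap 𝓘(ℝ, E') 𝓘(ℝ, ℝ) N ℝ (⊤ : ℕ∞), g p = g q) : p = q := by
  by_contra hpq
  obtain ⟨g, h0, h1⟩ := exists_smooth_sep (E' := E') hpq
  rw [h g, h1] at h0
  exact one_ne_zero h0

theorem milnor_exercise
    (φ : ContMDiffMap 𝓘(ℝ, E') 𝓘(ℝ, ℝ) N ℝ (⊤ : ℕ∞) →ₐ[ℝ] ContMDiffMap 𝓘(ℝ, E) 𝓘(ℝ, ℝ) M ℝ (⊤ : ℕ∞)) :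
    ∃! f : ContMDiffMap 𝓘(ℝ, E) 𝓘(ℝ, E') M N (⊤ : ℕ∞),
      ∀ g : ContMDiffMap 𝓘(ℝ, E') 𝓘(ℝ, ℝ) N ℝ (⊤ : ℕ∞), φ g = g.comp f := by
  haveI : LocallyCompactSpace N := Manifold.locallyCompact_of_finiteDimensional 𝓘(ℝ, E')
  choose f hf using fun x : M => char_is_eval ((evalAlgHom' x).comp φ)
  have hf' : ∀ (x : M) (g : ContMDiffMap 𝓘(ℝ, E') 𝓘(ℝ, ℝ) N ℝ (⊤ : ℕ∞)), φ g x = g (f x) := by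
    intro x g
    have := hf x g
    rwa [AlgHom.comp_apply, evalAlgHom'_apply] at this
  -- smoothness of f
  have hsmooth : ContMDiff 𝓘(ℝ, E) 𝓘(ℝ, E') (⊤ : ℕ∞) f := by
    intro x₀
    set p₀ := f x₀ with hp₀
    set e := chartAt E' p₀ with he
    obtain ⟨Kc, hKc, hx₀K, hKe⟩ :=
      exists_compact_subset e.open_source (mem_chart_source E' p₀)
    obtain ⟨ρ, hρ0, hρ1, hρmem⟩ := exists_contMDiffMap_zero_one_of_isClosed 𝓘(ℝ, E')
      (isClosed_compl_iff.2 isOpen_interior) (isClosed_singleton (x := p₀))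
      (disjoint_singleton_right.2 fun hp => hp hx₀K)
    have hρsupp : ∀ q : N, ρ q ≠ 0 → q ∈ e.source := by
      intro q hq
      by_contra hqs
      exact hq (hρ0 (fun hin : q ∈ interior Kc => hqs (hKe (interior_subset hin))))
    have hρp₀ : ρ p₀ = 1 := hρ1 rfl
    -- extended coordinate functions
    set b := Module.Basis.ofVectorSpace ℝ E' with hb
    set L : _ → E' →L[ℝ] ℝ := fun i => LinearMap.toContinuousLinearMap (b.coord i) with hL
    have hgext : ∀ i, ContMDiff 𝓘(ℝ, E') 𝓘(ℝ, ℝ) (⊤ : ℕ∞)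
        (fun q : N => if q ∈ e.source then ρ q * L i (e q) else 0) := by
      intro i q
      by_cases hq : q ∈ e.source
      · refine ContMDiffAt.congr_of_eventuallyEq
          (f := fun q : N => ρ q * L i (e q)) ?_ ?_
        · exact ((ρ.contMDiff q).mul
            (((L i).contMDiff.contMDiffAt).comp q
              (contMDiffOn_chart.contMDiffAt (e.open_source.mem_nhds hq))))
        · filter_upwards [e.open_source.mem_nhds hq] with y hy
          rw [if_pos hy]
      · have hqK : q ∈ Kcᶜ := fun hk => hq (hKe hk)
        refine contMDiffAt_const (c := (0:ℝ)) |>.congr_of_eventuallyEq ?_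
        filter_upwards [(hKc.isClosed.isOpen_compl).mem_nhds hqK] with y hy
        have hy0 : ρ y = 0 := hρ0 fun hin => hy (interior_subset hin)
        by_cases hys : y ∈ e.source <;> simp [hys, hy0]
    set Gext : _ → ContMDiffMap 𝓘(ℝ, E') 𝓘(ℝ, ℝ) N ℝ (⊤ : ℕ∞) :=
      fun i => ⟨fun q : N => if q ∈ e.source then ρ q * L i (e q) else 0, hgext i⟩ with hG
    set rφ := φ ρ with hrφdef
    set gφ : _ → ContMDiffMap 𝓘(ℝ, E) 𝓘(ℝ, ℝ) M ℝ (⊤ : ℕ∞) := fun i => φ (Gext i) with hgφdef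
    have hrφ : ∀ x : M, rφ x = ρ (f x) := fun x => hf' x ρ
    have hgφ : ∀ i (x : M), gφ i x = Gext i (f x) := fun i x => hf' x (Gext i)
    set U : Set M := rφ ⁻¹' Ioi 0 with hU
    have hUopen : IsOpen U := isOpen_Ioi.preimage rφ.contMDiff.continuous
    have hx₀U : x₀ ∈ U := by
      simp only [hU, mem_preimage, mem_Ioi, hrφ x₀, ← hp₀, hρp₀]
      norm_num
    have hfU : ∀ x ∈ U, f x ∈ e.source ∧ ρ (f x) ≠ 0 := by
      intro x hx
      have : 0 < ρ (f x) := by rw [← hrφ x]; exact hx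
      exact ⟨hρsupp _ this.ne', this.ne'⟩
    -- the smooth lift in coordinates
    set h : M → E' :=
      fun x => b.equivFunL.symm.toContinuousLinearMap (fun i => (rφ x)⁻¹ * gφ i x) with hh
    have hhsm : ContMDiffOn 𝓘(ℝ, E) 𝓘(ℝ, E') (⊤ : ℕ∞) h U := by
      apply b.equivFunL.symm.toContinuousLinearMap.contMDiff.comp_contMDiffOn
      refine contMDiffOn_pi_space.2 fun i => ?_
      exact ((rφ.contMDiff.contMDiffOn.inv₀ fun x hx => (show (0:ℝ) < rφ x from hx).ne').mul
        (gφ i).contMDiff.contMDiffOn)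
    have hhe : ∀ x ∈ U, h x = e (f x) := by
      intro x hx
      obtain ⟨hfs, hfne⟩ := hfU x hx
      have hcoord : (fun i => (rφ x)⁻¹ * gφ i x) = ⇑(b.repr (e (f x))) := by
        funext i
        rw [hgφ]
        show (rφ x)⁻¹ * (if f x ∈ e.source then ρ (f x) * L i (e (f x)) else 0) = _
        rw [if_pos hfs, hrφ, inv_mul_cancel_left₀ hfne]
        simp [hL, Module.Basis.coord_apply]
      rw [hh]
      show b.equivFunL.symm _ = _
      rw [hcoord, Module.Basis.equivFunL_symm_apply_repr]
    have hmaps : MapsTo h U e.target := fun x hx => by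
      rw [hhe x hx]; exact e.map_source (hfU x hx).1
    have hfsm : ContMDiffOn 𝓘(ℝ, E) 𝓘(ℝ, E') (⊤ : ℕ∞) f U := by
      have hcomp : ContMDiffOn 𝓘(ℝ, E) 𝓘(ℝ, E') (⊤ : ℕ∞) (e.symm ∘ h) U :=
        (contMDiffOn_chart_symm (x := p₀)).comp hhsm hmaps
      refine hcomp.congr fun x hx => ?_
      show f x = e.symm (h x)
      rw [hhe x hx, e.left_inv (hfU x hx).1]
    exact hfsm.contMDiffAt (hUopen.mem_nhds hx₀U)
  refine ⟨⟨f, hsmooth⟩, fun g => ContMDiffMap.ext fun x => hf' x g, ?_⟩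
  intro f' hf''
  ext x
  refine eq_of_forall_smooth_eq (E' := E') fun g => ?_
  have h1 : φ g x = g (f' x) := by rw [hf'' g]; rfl
  rw [← h1, hf' x g]
  rfl


end Main

/-- Every `ℝ`-algebra homomorphism `C^∞(N,ℝ) →ₐ[ℝ] C^∞(M,ℝ)` is precomposition with a unique
smooth map `f : M → N`; equivalently, `f ↦ (g ↦ g ∘ f)` is a bijection from smooth maps `M → N`
to `ℝ`-algebra homomorphisms `C^∞(N,ℝ) →ₐ[ℝ] C^∞(M,ℝ)`. -/
theorem stmt_3
    {E : Type*} [NormedAddCommGroup E] [NormedSpace ℝ E] [FiniteDimensional ℝ E]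
    {E' : Type*} [NormedAddCommGroup E'] [NormedSpace ℝ E'] [FiniteDimensional ℝ E']
    {M : Type*} [TopologicalSpace M] [ChartedSpace E M]
    [IsManifold 𝓘(ℝ, E) (⊤ : ℕ∞) M]
    {N : Type*} [TopologicalSpace N] [ChartedSpace E' N]
    [IsManifold 𝓘(ℝ, E') (⊤ : ℕ∞) N]
    [T2Space N] [SigmaCompactSpace N] :
    (∀ φ : ContMDiffMap 𝓘(ℝ, E') 𝓘(ℝ, ℝ) N ℝ (⊤ : ℕ∞) →ₐ[ℝ] ContMDiffMap 𝓘(ℝ, E) 𝓘(ℝ, ℝ) M ℝ (⊤ : ℕ∞),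
      ∃! f : ContMDiffMap 𝓘(ℝ, E) 𝓘(ℝ, E') M N (⊤ : ℕ∞),
        ∀ g : ContMDiffMap 𝓘(ℝ, E') 𝓘(ℝ, ℝ) N ℝ (⊤ : ℕ∞), φ g = g.comp f) ∧
    Function.Bijective
      (fun f : ContMDiffMap 𝓘(ℝ, E) 𝓘(ℝ, E') M N (⊤ : ℕ∞) => precompAlgHom f) := by
  refine ⟨milnor_exercise, ?_, ?_⟩
  · intro f f' hff
    ext x
    refine eq_of_forall_smooth_eq (E' := E') fun g => ?_
    exact congrArg (fun ψ : ContMDiffMap 𝓘(ℝ, E') 𝓘(ℝ, ℝ) N ℝ (⊤ : ℕ∞) →ₐ[ℝ]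
      ContMDiffMap 𝓘(ℝ, E) 𝓘(ℝ, ℝ) M ℝ (⊤ : ℕ∞) => ψ g x) hff
  · intro φ
    obtain ⟨f, hf, -⟩ := milnor_exercise φ
    exact ⟨f, AlgHom.ext fun g => (hf g).symm⟩
end

section
/- Let M and N be Hausdorff, σ-compact smooth manifolds without boundary modelled on finite-dimensional real normed spaces. If the ℝ-algebras C^∞(M,ℝ) and C^∞(N,ℝ) of smooth real-valued functions are isomorphic as ℝ-algebras, then M and N are diffeomorphic: there is a bijection f : M → N such that both f and its inverse are smooth. -/
open scoped Manifold
open Set Function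
open scoped ContDiff

section Aux

variable {E : Type*} [NormedAddCommGroup E] [NormedSpace ℝ E] [FiniteDimensional ℝ E]
  {M : Type*} [TopologicalSpace M] [ChartedSpace E M]
  [IsManifold 𝓘(ℝ, E) (⊤ : ℕ∞) M] [T2Space M] [SigmaCompactSpace M]

/-- Evaluation at a point as an `ℝ`-algebra homomorphism. -/
noncomputable def evalA (x : M) : C^∞⟮𝓘(ℝ, E), M; 𝓘(ℝ, ℝ), ℝ⟯ →ₐ[ℝ] ℝ :=
  (Pi.evalAlgHom ℝ (fun _ => ℝ) x).comp ContMDiffMap.coeFnAlgHom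

@[simp] lemma evalA_apply (x : M) (f : C^∞⟮𝓘(ℝ, E), M; 𝓘(ℝ, ℝ), ℝ⟯) : evalA x f = f x := rfl

/-- There is a smooth exhaustion function. -/
lemma exists_exhaustion :
    ∃ g : C^∞⟮𝓘(ℝ, E), M; 𝓘(ℝ, ℝ), ℝ⟯, ∀ c : ℝ, IsCompact ((g : M → ℝ) ⁻¹' Iic c) := by
  haveI : LocallyCompactSpace M := ChartedSpace.locallyCompactSpace E M
  set K := CompactExhaustion.choice M
  have Hloc : ∀ x : M, ∃ cc : ℝ, ∀ᶠ y in nhds x, cc ∈ Ici ((K.find y : ℝ)) := by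
    intro x
    refine ⟨((K.find x + 1 : ℕ) : ℝ), ?_⟩
    have hmem : x ∈ interior (K (K.find x + 1)) := K.subset_interior_succ _ (K.mem_find x)
    filter_upwards [isOpen_interior.mem_nhds hmem] with y hy
    have : K.find y ≤ K.find x + 1 := K.mem_iff_find_le.mp (interior_subset hy)
    simp only [mem_Ici]
    exact_mod_cast this
  obtain ⟨g, hg⟩ := exists_contMDiffMap_forall_mem_convex_of_local_const 𝓘(ℝ, E)
      (t := fun x : M => Ici ((K.find x : ℝ))) (fun x => convex_Ici _) Hloc
  refine ⟨g, fun c => ?_⟩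
  refine (K.isCompact (⌈c⌉₊ : ℕ)).of_isClosed_subset
    (isClosed_Iic.preimage g.contMDiff.continuous) (fun x hx => ?_)
  have h1 : (K.find x : ℝ) ≤ c := le_trans (hg x) hx
  have h2 : K.find x ≤ ⌈c⌉₊ := by exact_mod_cast h1.trans (Nat.le_ceil c)
  exact K.mem_iff_find_le.mpr h2

/-- Every `ℝ`-algebra homomorphism `C^∞(M, ℝ) → ℝ` is evaluation at a point. -/
lemma algHom_eq_eval (φ : C^∞⟮𝓘(ℝ, E), M; 𝓘(ℝ, ℝ), ℝ⟯ →ₐ[ℝ] ℝ) :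
    ∃ x : M, ∀ f : C^∞⟮𝓘(ℝ, E), M; 𝓘(ℝ, ℝ), ℝ⟯, φ f = f x := by
  by_contra hcon
  push_neg at hcon
  have hx : ∀ x : M, ∃ f : C^∞⟮𝓘(ℝ, E), M; 𝓘(ℝ, ℝ), ℝ⟯, φ f = 0 ∧ f x ≠ 0 := by
    intro x
    obtain ⟨f, hf⟩ := hcon x
    refine ⟨f - algebraMap ℝ _ (φ f), by simp, ?_⟩
    have h1 : (f - algebraMap ℝ _ (φ f)) x = f x - φ f := rfl
    rw [h1]
    exact sub_ne_zero.mpr (Ne.symm hf)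
  choose F hF0 hFne using hx
  obtain ⟨g, hg⟩ := exists_exhaustion (E := E) (M := M)
  set c := φ g with hc
  set Kc : Set M := (g : M → ℝ) ⁻¹' {c} with hKc
  have hKcomp : IsCompact Kc := (hg c).of_isClosed_subset
    (isClosed_singleton.preimage g.contMDiff.continuous) (fun x hx => le_of_eq hx)
  obtain ⟨t, hts⟩ := hKcomp.elim_finite_subcover (fun x : M => {y | F x y ≠ 0})
    (fun x => isOpen_ne.preimage (F x).contMDiff.continuous)
    (fun y _ => mem_iUnion.mpr ⟨y, hFne y⟩)
  set P : C^∞⟮𝓘(ℝ, E), M; 𝓘(ℝ, ℝ), ℝ⟯ :=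
    (g - algebraMap ℝ _ c) ^ 2 + ∑ x ∈ t, (F x) ^ 2 with hP
  have hφP : φ P = 0 := by
    simp [hP, map_sum, hF0, hc]
  have hPval : ∀ y : M, P y = (g y - c) ^ 2 + ∑ x ∈ t, (F x y) ^ 2 := by
    intro y
    show ContMDiffMap.evalRingHom y P = _
    simp only [hP, map_add, map_pow, map_sub, map_sum]
    rfl
  have hPpos : ∀ y : M, 0 < P y := by
    intro y
    rw [hPval y]
    rcases eq_or_ne (g y) c with hgy | hgy
    · have hyK : y ∈ Kc := by simpa [hKc] using hgy
      obtain ⟨x, hxt, hxy⟩ : ∃ x ∈ t, F x y ≠ 0 := by simpa using hts hyK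
      have h1 : 0 < ∑ x ∈ t, (F x y) ^ 2 :=
        Finset.sum_pos' (fun i _ => sq_nonneg _)
          ⟨x, hxt, lt_of_le_of_ne (sq_nonneg _) (Ne.symm (pow_ne_zero _ hxy))⟩
      linarith [sq_nonneg (g y - c)]
    · have h1 : 0 < (g y - c) ^ 2 :=
        lt_of_le_of_ne (sq_nonneg _) (Ne.symm (pow_ne_zero _ (sub_ne_zero.mpr hgy)))
      have h2 : 0 ≤ ∑ x ∈ t, (F x y) ^ 2 := Finset.sum_nonneg fun i _ => sq_nonneg _
      linarith
  have hQs : ContMDiff 𝓘(ℝ, E) 𝓘(ℝ, ℝ) ∞ (fun y : M => (P y)⁻¹) :=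
    P.contMDiff.inv₀ fun y => (hPpos y).ne'
  have hPQ : P * ⟨fun y => (P y)⁻¹, hQs⟩ = 1 :=
    ContMDiffMap.ext fun y => mul_inv_cancel₀ (hPpos y).ne'
  have h01 : (0 : ℝ) = 1 := by
    have := congrArg φ hPQ
    have h2 : φ P * φ ⟨fun y => (P y)⁻¹, hQs⟩ = φ 1 := (map_mul φ _ _).symm.trans this
    rw [hφP, zero_mul, map_one] at h2
    exact h2
  exact zero_ne_one h01

/-- Smooth functions separate points. -/
lemma eq_of_forall_eval_eq {a b : M}
    (h : ∀ f : C^∞⟮𝓘(ℝ, E), M; 𝓘(ℝ, ℝ), ℝ⟯, f a = f b) : a = b := by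
  by_contra hne
  obtain ⟨f, hf0, hf1, -⟩ := exists_contMDiffMap_zero_one_of_isClosed 𝓘(ℝ, E)
    (isClosed_singleton (x := a)) (isClosed_singleton (x := b))
    (disjoint_singleton.mpr hne)
  have := h f
  rw [hf0 rfl, hf1 rfl] at this
  exact zero_ne_one this

variable {E' : Type*} [NormedAddCommGroup E'] [NormedSpace ℝ E'] [FiniteDimensional ℝ E']
  {N : Type*} [TopologicalSpace N] [ChartedSpace E' N]
  [IsManifold 𝓘(ℝ, E') (⊤ : ℕ∞) N] [T2Space N] [SigmaCompactSpace N]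

/-- A map into a manifold is smooth if its compositions with all smooth real functions
are smooth. -/
lemma contMDiff_of_comp (h : M → N)
    (hc : ∀ g : C^∞⟮𝓘(ℝ, E'), N; 𝓘(ℝ, ℝ), ℝ⟯, ContMDiff 𝓘(ℝ, E) 𝓘(ℝ, ℝ) ∞ (fun x => g (h x))) :
    ContMDiff 𝓘(ℝ, E) 𝓘(ℝ, E') ∞ h := by
  haveI : LocallyCompactSpace N := ChartedSpace.locallyCompactSpace E' N
  -- continuity
  have hcont : Continuous h := by
    rw [continuous_iff_continuousAt]
    intro x
    rw [continuousAt_def]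
    intro U hU
    obtain ⟨V, hVU, hVopen, hxV⟩ := mem_nhds_iff.mp hU
    obtain ⟨g, hg0, hg1, -⟩ := exists_contMDiffMap_zero_one_of_isClosed 𝓘(ℝ, E')
      (hVopen.isClosed_compl) (isClosed_singleton (x := h x))
      (disjoint_singleton_right.mpr (fun hmem => hmem hxV))
    have hgx : g (h x) = 1 := hg1 rfl
    have hWopen : IsOpen {z : M | g (h z) ≠ 0} :=
      isOpen_ne.preimage (hc g).continuous
    have hxW : x ∈ {z : M | g (h z) ≠ 0} := by simp [hgx]
    refine Filter.mem_of_superset (hWopen.mem_nhds hxW) (fun z hz => ?_)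
    rcases Classical.em (h z ∈ V) with hv | hv
    · exact hVU hv
    · exact absurd (hg0 hv) hz
  -- smoothness at each point
  intro x
  set y := h x with hy
  have hy_src : y ∈ (extChartAt 𝓘(ℝ, E') y).source := mem_extChartAt_source (I := 𝓘(ℝ, E')) y
  obtain ⟨K1, hK1comp, hyK1, hK1src⟩ := exists_compact_subset
    (isOpen_extChartAt_source (I := 𝓘(ℝ, E')) y) hy_src
  obtain ⟨K2, hK2comp, hyK2, hK2K1⟩ := exists_compact_subset isOpen_interior hyK1
  obtain ⟨χ, hχsmooth, hχrange, hχsupp, hχone⟩ :=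
    exists_contMDiff_support_eq_eq_one_iff 𝓘(ℝ, E') isOpen_interior hK2comp.isClosed hK2K1
  -- χ : N → ℝ smooth, support χ = interior K1, χ = 1 exactly on K2
  set F : N → E' := fun z => χ z • extChartAt 𝓘(ℝ, E') y z with hF
  have htsupp : tsupport χ ⊆ (extChartAt 𝓘(ℝ, E') y).source := by
    refine Subset.trans ?_ hK1src
    rw [tsupport, hχsupp]
    exact hK1comp.isClosed.closure_subset_iff.mpr interior_subset
  have hFsmooth : ContMDiff 𝓘(ℝ, E') 𝓘(ℝ, E') ∞ F := by
    intro z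
    rcases Classical.em (z ∈ (extChartAt 𝓘(ℝ, E') y).source) with hz | hz
    · have h1 : ContMDiffOn 𝓘(ℝ, E') 𝓘(ℝ, E') ∞ (extChartAt 𝓘(ℝ, E') y)
          (extChartAt 𝓘(ℝ, E') y).source := by
        simpa using contMDiffOn_extChartAt (n := (⊤ : ℕ∞)) (I := 𝓘(ℝ, E')) (x := y)
      exact ((hχsmooth z).smul
        ((h1 z hz).contMDiffAt ((isOpen_extChartAt_source (I := 𝓘(ℝ, E')) y).mem_nhds hz)))
    · have hz' : z ∈ (tsupport χ)ᶜ := fun hmem => hz (htsupp hmem)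
      refine (contMDiffAt_const (c := (0 : E'))).congr_of_eventuallyEq ?_
      filter_upwards [(isClosed_tsupport χ).isOpen_compl.mem_nhds hz'] with w hw
      have : χ w = 0 := image_eq_zero_of_notMem_tsupport hw
      simp [hF, this]
  -- F ∘ h is smooth using coordinates
  have hFh : ContMDiff 𝓘(ℝ, E) 𝓘(ℝ, E') ∞ (fun x => F (h x)) := by
    set b := Module.finBasis ℝ E' with hb
    have hpi : ContMDiff 𝓘(ℝ, E) 𝓘(ℝ, Fin (Module.finrank ℝ E') → ℝ) ∞
        (fun x => b.equivFunL (F (h x))) := by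
      rw [contMDiff_pi_space]
      intro i
      let ℓ : E' →L[ℝ] ℝ := (ContinuousLinearMap.proj i).comp
        (b.equivFunL : E' ≃L[ℝ] (Fin (Module.finrank ℝ E') → ℝ)).toContinuousLinearMap
      have : ContMDiff 𝓘(ℝ, E') 𝓘(ℝ, ℝ) ∞ (fun z => ℓ (F z)) :=
        ℓ.contMDiff.comp hFsmooth
      exact hc ⟨fun z => ℓ (F z), this⟩
    have := (b.equivFunL.symm : (Fin (Module.finrank ℝ E') → ℝ) →L[ℝ] E').contMDiff.comp hpi
    have heq : (⇑(b.equivFunL.symm : (Fin (Module.finrank ℝ E') → ℝ) →L[ℝ] E') ∘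
        fun x => b.equivFunL (F (h x))) = fun x => F (h x) := by
      funext x
      simp
    rwa [heq] at this
  -- conclude
  rw [contMDiffAt_iff_target]
  refine ⟨hcont.continuousAt, ?_⟩
  refine (hFh x).congr_of_eventuallyEq ?_
  have hmem : h ⁻¹' interior K2 ∈ nhds x :=
    hcont.continuousAt.preimage_mem_nhds (isOpen_interior.mem_nhds hyK2)
  filter_upwards [hmem] with z hz
  have hχz : χ (h z) = 1 := (hχone (h z)).mp (interior_subset hz)
  simp [Function.comp, hF, hχz, hy]

end Aux

/-- If the `ℝ`-algebras of smooth real-valued functions on two Hausdorff, σ-compact smooth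
manifolds are isomorphic, then the manifolds are diffeomorphic. -/
theorem stmt_4
    {E : Type*} [NormedAddCommGroup E] [NormedSpace ℝ E] [FiniteDimensional ℝ E]
    {E' : Type*} [NormedAddCommGroup E'] [NormedSpace ℝ E'] [FiniteDimensional ℝ E']
    {M : Type*} [TopologicalSpace M] [ChartedSpace E M]
    [IsManifold 𝓘(ℝ, E) (⊤ : ℕ∞) M] [T2Space M] [SigmaCompactSpace M]
    {N : Type*} [TopologicalSpace N] [ChartedSpace E' N]
    [IsManifold 𝓘(ℝ, E') (⊤ : ℕ∞) N] [T2Space N] [SigmaCompactSpace N]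
    (e : ContMDiffMap 𝓘(ℝ, E) 𝓘(ℝ, ℝ) M ℝ (⊤ : ℕ∞) ≃ₐ[ℝ] ContMDiffMap 𝓘(ℝ, E') 𝓘(ℝ, ℝ) N ℝ (⊤ : ℕ∞)) :
    ∃ f : M ≃ N, ContMDiff 𝓘(ℝ, E) 𝓘(ℝ, E') (⊤ : ℕ∞) f ∧ ContMDiff 𝓘(ℝ, E') 𝓘(ℝ, E) (⊤ : ℕ∞) f.symm := by
  classical
  have hMf : ∀ x : M, ∃ y : N,
      ∀ g : C^∞⟮𝓘(ℝ, E'), N; 𝓘(ℝ, ℝ), ℝ⟯, (e.symm g) x = g y := by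
    intro x
    obtain ⟨y, hy⟩ := algHom_eq_eval ((evalA x).comp e.symm.toAlgHom)
    exact ⟨y, fun g => by simpa using hy g⟩
  choose f hf using hMf
  have hNk : ∀ y : N, ∃ x : M,
      ∀ g : C^∞⟮𝓘(ℝ, E), M; 𝓘(ℝ, ℝ), ℝ⟯, (e g) y = g x := by
    intro y
    obtain ⟨x, hx⟩ := algHom_eq_eval ((evalA y).comp e.toAlgHom)
    exact ⟨x, fun g => by simpa using hx g⟩
  choose k hk using hNk
  have hkf : ∀ x, k (f x) = x := by
    intro x
    refine eq_of_forall_eval_eq (E := E) (fun gM => ?_)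
    have h1 : (e gM) (f x) = gM (k (f x)) := hk (f x) gM
    have h2 : (e.symm (e gM)) x = (e gM) (f x) := hf x (e gM)
    rw [AlgEquiv.symm_apply_apply] at h2
    rw [← h1, ← h2]
  have hfk : ∀ y, f (k y) = y := by
    intro y
    refine eq_of_forall_eval_eq (E := E') (fun gN => ?_)
    have h1 : (e.symm gN) (k y) = gN (f (k y)) := hf (k y) gN
    have h2 : (e (e.symm gN)) y = (e.symm gN) (k y) := hk y (e.symm gN)
    rw [AlgEquiv.apply_symm_apply] at h2
    rw [← h1, ← h2]
  refine ⟨⟨f, k, hkf, hfk⟩, ?_, ?_⟩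
  · apply contMDiff_of_comp
    intro g
    have hfg : (fun x => g (f x)) = ⇑(e.symm g) := funext fun x => (hf x g).symm
    show ContMDiff 𝓘(ℝ, E) 𝓘(ℝ, ℝ) (⊤ : ℕ∞) (fun x => g (f x))
    rw [hfg]
    exact (e.symm g).contMDiff
  · apply contMDiff_of_comp
    intro g
    have hkg : (fun y => g (k y)) = ⇑(e g) := funext fun y => (hk y g).symm
    show ContMDiff 𝓘(ℝ, E') 𝓘(ℝ, ℝ) (⊤ : ℕ∞) (fun y => g (k y))
    rw [hkg]
    exact (e g).contMDiff
end

section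
/- Let R be a commutative ring and let F : ModuleCat R ⥤ ModuleCat R be an additive, R-linear functor which is an equivalence of categories. Then F is naturally isomorphic to the functor of tensoring with F(R): there is a natural isomorphism between F and the functor M ↦ F(R) ⊗[R] M (the functor tensorLeft (F.obj R) for the monoidal structure on ModuleCat R). -/
open CategoryTheory

section Aux

variable {R : Type u} [CommRing R]

/-- Evaluation at `1` as a linear equivalence `Hom(R, M) ≃ M`. -/
noncomputable def evalOneEquiv (M : ModuleCat.{u} R) : (ModuleCat.of R R ⟶ M) ≃ₗ[R] M where
  toFun f := f (1 : R)
  map_add' f g := rfl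
  map_smul' r f := rfl
  invFun m := ModuleCat.ofHom (LinearMap.toSpanSingleton R M m)
  left_inv f := by
    refine ModuleCat.hom_ext (LinearMap.ext fun r => ?_)
    show r • f (1 : R) = f r
    rw [← f.hom.map_smul, smul_eq_mul, mul_one]
  right_inv m := by
    show (1 : R) • m = m
    simp

@[simp] lemma evalOneEquiv_symm_apply (M : ModuleCat.{u} R) (m : M) :
    (evalOneEquiv M).symm m = ModuleCat.ofHom (LinearMap.toSpanSingleton R M m) := rfl

/-- `F.map` as a linear equivalence on hom modules, for a fully faithful additive linear
functor. -/
noncomputable def mapLinearEquiv (F : ModuleCat.{u} R ⥤ ModuleCat.{u} R) [F.Additive]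
    [F.Linear R] [F.Full] [F.Faithful] (M N : ModuleCat.{u} R) :
    (M ⟶ N) ≃ₗ[R] (F.obj M ⟶ F.obj N) where
  toFun f := F.map f
  map_add' f g := F.map_add
  map_smul' r f := F.map_smul r f
  invFun g := F.preimage g
  left_inv f := F.preimage_map f
  right_inv g := F.map_preimage g

@[simp] lemma mapLinearEquiv_apply (F : ModuleCat.{u} R ⥤ ModuleCat.{u} R) [F.Additive]
    [F.Linear R] [F.Full] [F.Faithful] (M N : ModuleCat.{u} R) (f : M ⟶ N) :
    mapLinearEquiv F M N f = F.map f := rfl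

/-- Postcomposition with an isomorphism, as a linear equivalence on hom modules. -/
noncomputable def postcompEquiv (A : ModuleCat.{u} R) {X Y : ModuleCat.{u} R} (i : X ≅ Y) :
    (A ⟶ X) ≃ₗ[R] (A ⟶ Y) where
  toFun f := f ≫ i.hom
  map_add' f g := Preadditive.add_comp _ _ _ _ _ _
  map_smul' r f := Linear.smul_comp _ _ _ _ _ _
  invFun g := g ≫ i.inv
  left_inv f := by simp
  right_inv g := by simp

@[simp] lemma postcompEquiv_apply (A : ModuleCat.{u} R) {X Y : ModuleCat.{u} R} (i : X ≅ Y)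
    (f : A ⟶ X) : postcompEquiv A i f = f ≫ i.hom := rfl

end Aux

/-- An additive, `R`-linear self-equivalence of the category of `R`-modules is naturally
isomorphic to tensoring with its value on `R`. -/
theorem stmt_9 {R : Type u} [CommRing R]
    (F : ModuleCat.{u} R ⥤ ModuleCat.{u} R) [F.Additive] [F.Linear R] [F.IsEquivalence] :
    Nonempty (F ≅ MonoidalCategory.tensorLeft (F.obj (ModuleCat.of R R))) := by
  set A := F.obj (ModuleCat.of R R) with hA
  -- the inverse of `F` is isomorphic to the internal hom out of `A`
  let chain : ∀ N : ModuleCat.{u} R, (F.inv.obj N ≃ₗ[R] ((ihom A).obj N)) := fun N =>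
    (evalOneEquiv (F.inv.obj N)).symm ≪≫ₗ
      (mapLinearEquiv F (ModuleCat.of R R) (F.inv.obj N)) ≪≫ₗ
      (postcompEquiv A (F.asEquivalence.counitIso.app N))
  have key : ∀ {N N' : ModuleCat.{u} R} (g : N ⟶ N') (x : F.inv.obj N),
      chain N' (F.inv.map g x) = (chain N x) ≫ g := by
    intro N N' g x
    simp only [chain, LinearEquiv.trans_apply, evalOneEquiv_symm_apply,
      mapLinearEquiv_apply, postcompEquiv_apply]
    let t : ModuleCat.of R R ⟶ F.inv.obj N := ModuleCat.ofHom (LinearMap.toSpanSingleton R (F.inv.obj N) x)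
    let t' : ModuleCat.of R R ⟶ F.inv.obj N' :=
      ModuleCat.ofHom (LinearMap.toSpanSingleton R (F.inv.obj N') (F.inv.map g x))
    have h1 : t' = t ≫ F.inv.map g := by
      refine ModuleCat.hom_ext (LinearMap.ext fun r => ?_)
      show r • (F.inv.map g x) = F.inv.map g (r • x)
      simp
    show F.map t' ≫ (F.asEquivalence.counitIso.app N').hom =
      (F.map t ≫ (F.asEquivalence.counitIso.app N).hom) ≫ g
    rw [h1, F.map_comp]
    exact (Category.assoc _ _ _).trans ((congrArg (F.map t ≫ ·)
      (F.asEquivalence.counitIso.hom.naturality g)).trans (Category.assoc _ _ _).symm)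
  let θ : F.inv ≅ ihom A := NatIso.ofComponents
    (fun N => (chain N).toModuleIso) (fun g => by ext x; exact key g x)
  exact ⟨(F.asEquivalence.toAdjunction.leftAdjointUniq
    ((ihom.adjunction A).ofNatIsoRight θ.symm))⟩
end
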